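/- Consider Gauss–Seidel waveform relaxation for the coupled linear system x' = a x + b y + f, y' = c x + d y + g on [0, T], where each sweep solves the first equation exactly using the previous iterate of y and then the second equation exactly using the new x. The error vectors e_x^{(k)} = x^{(k)} − x, e_y^{(k)} = y^{(k)} − y satisfy ‖(e_x^{(k)}, e_y^{(k)})‖_∞ ≤ (C T)^k / k! · ‖(e_x^{(0)}, e_y^{(0)})‖_∞ for a constant C depending only on a, b, c, d, and T; hence the iteration converges uniformly on [0, T]. -/

import Mathlib

open Set intervalIntegral MeasureTheory Real

lemma gronwall_poly {T K lam : ℝ} (hT : 0 < T) (hK : 0 ≤ K) (hlam : 0 ≤ lam) (n : ℕ)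
    {u : ℝ → ℝ} (hu : ContinuousOn u (Icc 0 T))
    (hint : ∀ t ∈ Icc 0 T,
      u t ≤ ∫ τ in (0:ℝ)..t, (K * u τ + lam * τ ^ n / n.factorial)) :
    ∀ t ∈ Icc 0 T, u t ≤ Real.exp (K * T) * lam * t ^ (n + 1) / (n + 1).factorial := by
  set F : ℝ → ℝ := fun τ => K * u τ + lam * τ ^ n / n.factorial with hF
  have hFc : ContinuousOn F (Icc 0 T) :=
    (continuousOn_const.mul hu).add
      (((continuous_const.mul (continuous_pow n)).div_const _).continuousOn)
  set v : ℝ → ℝ := fun t => ∫ τ in (0:ℝ)..t, F τ with hv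
  have hII : ∀ t ∈ Icc (0:ℝ) T, IntervalIntegrable F volume 0 t := by
    intro t ht
    exact (hFc.mono (by rw [uIcc_of_le ht.1]; exact Icc_subset_Icc le_rfl ht.2)).intervalIntegrable
  have hv_cont : ContinuousOn v (Icc 0 T) := by
    have := continuousOn_primitive_interval
      (f := F) (a := (0:ℝ)) (b := T) (μ := volume)
      (by rw [uIcc_of_le hT.le]; exact hFc.integrableOn_Icc)
    rwa [uIcc_of_le hT.le] at this
  have hv_deriv : ∀ t ∈ Ioo (0:ℝ) T, HasDerivAt v (F t) t := by
    intro t ht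
    have hmem : Icc (0:ℝ) T ∈ nhds t := Icc_mem_nhds ht.1 ht.2
    exact integral_hasDerivAt_right (hII t ⟨ht.1.le, ht.2.le⟩)
      ⟨Icc 0 T, hmem, hFc.aestronglyMeasurable measurableSet_Icc⟩
      (hFc.continuousAt hmem)
  have huv : ∀ t ∈ Icc (0:ℝ) T, u t ≤ v t := hint
  set g : ℝ → ℝ := fun t => lam * t ^ (n + 1) / (n + 1).factorial - Real.exp (-K * t) * v t
    with hg
  have hg_deriv : ∀ t ∈ Ioo (0:ℝ) T, HasDerivAt g
      (lam * ((n+1) * t ^ n) / (n + 1).factorial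
        - ((-K) * Real.exp (-K * t) * v t + Real.exp (-K * t) * F t)) t := by
    intro t ht
    have h1 : HasDerivAt (fun t : ℝ => lam * t ^ (n+1) / (n + 1).factorial)
        (lam * ((n+1) * t ^ n) / (n + 1).factorial) t := by
      have := ((hasDerivAt_pow (n+1) t).const_mul lam).div_const ((n + 1).factorial : ℝ)
      simpa using this
    have h2 : HasDerivAt (fun t : ℝ => Real.exp (-K * t)) ((-K) * Real.exp (-K * t)) t := by
      have hlin : HasDerivAt (fun y : ℝ => -K * y) (-K) t := by
        simpa using (hasDerivAt_id t).const_mul (-K)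
      simpa [mul_comm] using hlin.exp
    exact h1.sub (h2.mul (hv_deriv t ht))
  have hg_mono : MonotoneOn g (Icc 0 T) := by
    apply monotoneOn_of_deriv_nonneg (convex_Icc 0 T)
    · exact (continuousOn_const.mul (continuousOn_pow _)).div_const _ |>.sub
        (((Real.continuous_exp.comp (continuous_const.mul continuous_id)).continuousOn).mul hv_cont)
    · intro t ht
      rw [interior_Icc] at ht
      exact ((hg_deriv t ht).differentiableAt).differentiableWithinAt
    · intro t ht
      rw [interior_Icc] at ht
      rw [(hg_deriv t ht).deriv]
      have htmem : t ∈ Icc (0:ℝ) T := ⟨ht.1.le, ht.2.le⟩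
      have hexp_le : Real.exp (-K * t) ≤ 1 := by
        rw [Real.exp_le_one_iff]
        nlinarith [ht.1]
      have hexp_pos : 0 < Real.exp (-K * t) := Real.exp_pos _
      have huvt : u t ≤ v t := huv t htmem
      have hpow : 0 ≤ lam * t ^ n / n.factorial :=
        div_nonneg (mul_nonneg hlam (pow_nonneg ht.1.le n)) (Nat.cast_nonneg _)
      have hfac : ((n+1).factorial : ℝ) = (n.factorial : ℝ) * (n + 1) := by
        rw [Nat.factorial_succ]; push_cast; ring
      have key : lam * ((n+1) * t ^ n) / (n + 1).factorial = lam * t ^ n / n.factorial := by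
        rw [hfac]; field_simp
      rw [key, hF]
      simp only
      have h1 : 0 ≤ (1 - Real.exp (-K * t)) * (lam * t ^ n / n.factorial) :=
        mul_nonneg (by linarith) hpow
      have h2 : 0 ≤ K * Real.exp (-K * t) * (v t - u t) :=
        mul_nonneg (mul_nonneg hK hexp_pos.le) (by linarith)
      nlinarith [h1, h2]
  intro t ht
  have h0 : g 0 ≤ g t := hg_mono (left_mem_Icc.2 hT.le) ht ht.1
  have hg0 : g 0 = 0 := by simp [hg, hv]
  rw [hg0] at h0
  have hgt : Real.exp (-K * t) * v t ≤ lam * t ^ (n + 1) / (n + 1).factorial := by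
    simp only [hg, sub_nonneg] at h0; exact h0
  have hexp : Real.exp (K * t) ≤ Real.exp (K * T) :=
    Real.exp_le_exp.2 (mul_le_mul_of_nonneg_left ht.2 hK)
  have hvt : v t ≤ Real.exp (K * t) * (lam * t ^ (n + 1) / (n + 1).factorial) := by
    have h := mul_le_mul_of_nonneg_left hgt (Real.exp_pos (K * t)).le
    rwa [← mul_assoc, ← Real.exp_add, (by ring : K * t + -K * t = 0), Real.exp_zero,
      one_mul] at h
  have hnn : 0 ≤ lam * t ^ (n + 1) / (n + 1).factorial :=
    div_nonneg (mul_nonneg hlam (pow_nonneg ht.1 _)) (Nat.cast_nonneg _)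
  calc u t ≤ v t := huv t ht
    _ ≤ Real.exp (K * t) * (lam * t ^ (n + 1) / (n + 1).factorial) := hvt
    _ ≤ Real.exp (K * T) * (lam * t ^ (n + 1) / (n + 1).factorial) :=
        mul_le_mul_of_nonneg_right hexp hnn
    _ = Real.exp (K * T) * lam * t ^ (n + 1) / (n + 1).factorial := by ring


/-- Superlinear convergence of Gauss–Seidel waveform relaxation for the coupled
    linear system x' = a x + b y + f, y' = c x + d y + g on [0, T]: there is a
    constant C depending only on a, b, c, d (and T) such that the sup-norm
    error after k sweeps is bounded by (C T)^k / k! times the initial error. -/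
theorem stmt_15 (a b c d T : ℝ) (hT : 0 < T) :
    ∃ C : ℝ, 0 < C ∧
      ∀ (f g : ℝ → ℝ), ContinuousOn f (Icc 0 T) → ContinuousOn g (Icc 0 T) →
      ∀ (x y : ℝ → ℝ),
        (∀ t ∈ Icc 0 T, HasDerivAt x (a * x t + b * y t + f t) t) →
        (∀ t ∈ Icc 0 T, HasDerivAt y (c * x t + d * y t + g t) t) →
      ∀ (X Y : ℕ → ℝ → ℝ),
        (∀ k, ContinuousOn (X k) (Icc 0 T)) →
        (∀ k, ContinuousOn (Y k) (Icc 0 T)) →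
        (∀ k, ∀ t ∈ Icc 0 T, X (k + 1) t
          = x 0 + ∫ τ in (0:ℝ)..t, (a * X (k + 1) τ + b * Y k τ + f τ)) →
        (∀ k, ∀ t ∈ Icc 0 T, Y (k + 1) t
          = y 0 + ∫ τ in (0:ℝ)..t, (c * X (k + 1) τ + d * Y k τ + g τ)) →
      ∀ B : ℝ,
        (∀ t ∈ Icc 0 T, max |X 0 t - x t| |Y 0 t - y t| ≤ B) →
        ∀ k, ∀ t ∈ Icc 0 T,
          max |X k t - x t| |Y k t - y t|
            ≤ (C * T) ^ k / (Nat.factorial k) * B := by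
  set E : ℝ := Real.exp (|a| * T) with hE
  have hE0 : 0 < E := Real.exp_pos _
  refine ⟨1 + E * |b| * (1 + |c| * T) + |d|, by positivity, ?_⟩
  set C : ℝ := 1 + E * |b| * (1 + |c| * T) + |d| with hCdef
  have hC0 : 0 < C := by positivity
  intro f g hf hg x y hx hy X Y hXc hYc hXeq hYeq B hB
  have hB0 : 0 ≤ B := le_trans (le_trans (abs_nonneg _) (le_max_left _ _)) (hB 0 ⟨le_rfl, hT.le⟩)
  have hxc : ContinuousOn x (Icc 0 T) := fun t ht => (hx t ht).continuousAt.continuousWithinAt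
  have hyc : ContinuousOn y (Icc 0 T) := fun t ht => (hy t ht).continuousAt.continuousWithinAt
  have hsub : ∀ t ∈ Icc (0:ℝ) T, Icc (0:ℝ) t ⊆ Icc 0 T := fun t ht => Icc_subset_Icc le_rfl ht.2
  have hII : ∀ (h : ℝ → ℝ), ContinuousOn h (Icc 0 T) → ∀ t ∈ Icc (0:ℝ) T,
      IntervalIntegrable h volume 0 t := fun h hh t ht =>
    (hh.mono (by rw [uIcc_of_le ht.1]; exact hsub t ht)).intervalIntegrable
  -- exact solutions satisfy the integral equations
  have hxcomb : ContinuousOn (fun τ => a * x τ + b * y τ + f τ) (Icc 0 T) :=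
    ((continuousOn_const.mul hxc).add (continuousOn_const.mul hyc)).add hf
  have hycomb : ContinuousOn (fun τ => c * x τ + d * y τ + g τ) (Icc 0 T) :=
    ((continuousOn_const.mul hxc).add (continuousOn_const.mul hyc)).add hg
  have hxinte : ∀ t ∈ Icc (0:ℝ) T, x t = x 0 + ∫ τ in (0:ℝ)..t, (a * x τ + b * y τ + f τ) := by
    intro t ht
    rw [integral_eq_sub_of_hasDerivAt
      (fun τ hτ => hx τ (by rw [uIcc_of_le ht.1] at hτ; exact hsub t ht hτ))
      (hII _ hxcomb t ht)]
    ring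
  have hyinte : ∀ t ∈ Icc (0:ℝ) T, y t = y 0 + ∫ τ in (0:ℝ)..t, (c * x τ + d * y τ + g τ) := by
    intro t ht
    rw [integral_eq_sub_of_hasDerivAt
      (fun τ hτ => hy τ (by rw [uIcc_of_le ht.1] at hτ; exact hsub t ht hτ))
      (hII _ hycomb t ht)]
    ring
  -- error integral equations
  have hex : ∀ k, ∀ t ∈ Icc (0:ℝ) T, X (k+1) t - x t
      = ∫ τ in (0:ℝ)..t, (a * (X (k+1) τ - x τ) + b * (Y k τ - y τ)) := by
    intro k t ht
    have h1 : IntervalIntegrable (fun τ => a * X (k+1) τ + b * Y k τ + f τ) volume 0 t :=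
      hII _ (((continuousOn_const.mul (hXc (k+1))).add (continuousOn_const.mul (hYc k))).add hf)
        t ht
    have h2 : IntervalIntegrable (fun τ => a * x τ + b * y τ + f τ) volume 0 t :=
      hII _ hxcomb t ht
    rw [hXeq k t ht, hxinte t ht,
      show (x 0 + ∫ τ in (0:ℝ)..t, (a * X (k+1) τ + b * Y k τ + f τ))
          - (x 0 + ∫ τ in (0:ℝ)..t, (a * x τ + b * y τ + f τ))
        = (∫ τ in (0:ℝ)..t, (a * X (k+1) τ + b * Y k τ + f τ))
          - ∫ τ in (0:ℝ)..t, (a * x τ + b * y τ + f τ) by ring,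
      ← intervalIntegral.integral_sub h1 h2]
    congr 1
    ext τ
    ring
  have hey : ∀ k, ∀ t ∈ Icc (0:ℝ) T, Y (k+1) t - y t
      = ∫ τ in (0:ℝ)..t, (c * (X (k+1) τ - x τ) + d * (Y k τ - y τ)) := by
    intro k t ht
    have h1 : IntervalIntegrable (fun τ => c * X (k+1) τ + d * Y k τ + g τ) volume 0 t :=
      hII _ (((continuousOn_const.mul (hXc (k+1))).add (continuousOn_const.mul (hYc k))).add hg)
        t ht
    have h2 : IntervalIntegrable (fun τ => c * x τ + d * y τ + g τ) volume 0 t :=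
      hII _ hycomb t ht
    rw [hYeq k t ht, hyinte t ht,
      show (y 0 + ∫ τ in (0:ℝ)..t, (c * X (k+1) τ + d * Y k τ + g τ))
          - (y 0 + ∫ τ in (0:ℝ)..t, (c * x τ + d * y τ + g τ))
        = (∫ τ in (0:ℝ)..t, (c * X (k+1) τ + d * Y k τ + g τ))
          - ∫ τ in (0:ℝ)..t, (c * x τ + d * y τ + g τ) by ring,
      ← intervalIntegral.integral_sub h1 h2]
    congr 1
    ext τ
    ring
  -- the key induction
  have key : ∀ k, ∀ t ∈ Icc (0:ℝ) T,
      |X k t - x t| ≤ B * C ^ k * t ^ k / k.factorial ∧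
      |Y k t - y t| ≤ B * C ^ k * t ^ k / k.factorial := by
    intro k
    induction k with
    | zero =>
      intro t ht
      simp only [pow_zero, mul_one, Nat.factorial_zero, Nat.cast_one, div_one]
      exact ⟨le_trans (le_max_left _ _) (hB t ht), le_trans (le_max_right _ _) (hB t ht)⟩
    | succ k ih =>
      have hfacpos : (0:ℝ) < (k.factorial : ℝ) := by positivity
      have hlam0 : (0:ℝ) ≤ |b| * B * C ^ k :=
        mul_nonneg (mul_nonneg (abs_nonneg b) hB0) (pow_nonneg hC0.le k)
      -- the x-error bound, via Gronwall
      have hxb : ∀ t ∈ Icc (0:ℝ) T, |X (k+1) t - x t|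
          ≤ E * (|b| * B * C ^ k) * t ^ (k + 1) / (k + 1).factorial := by
        have hu : ContinuousOn (fun s => |X (k+1) s - x s|) (Icc 0 T) :=
          ((hXc (k+1)).sub hxc).abs
        have hint : ∀ t ∈ Icc (0:ℝ) T, |X (k+1) t - x t|
            ≤ ∫ τ in (0:ℝ)..t,
              (|a| * |X (k+1) τ - x τ| + (|b| * B * C ^ k) * τ ^ k / k.factorial) := by
          intro t ht
          have int1 : IntervalIntegrable
              (fun τ => |a * (X (k+1) τ - x τ) + b * (Y k τ - y τ)|) volume 0 t :=
            hII _ (((continuousOn_const.mul ((hXc (k+1)).sub hxc)).add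
              (continuousOn_const.mul ((hYc k).sub hyc))).abs) t ht
          have int2 : IntervalIntegrable
              (fun τ => |a| * |X (k+1) τ - x τ| + (|b| * B * C ^ k) * τ ^ k / k.factorial)
              volume 0 t :=
            hII _ ((continuousOn_const.mul (((hXc (k+1)).sub hxc).abs)).add
              (((continuous_const.mul (continuous_pow k)).div_const _).continuousOn)) t ht
          calc |X (k+1) t - x t|
              = |∫ τ in (0:ℝ)..t, (a * (X (k+1) τ - x τ) + b * (Y k τ - y τ))| := by
                rw [hex k t ht]
            _ ≤ ∫ τ in (0:ℝ)..t, |a * (X (k+1) τ - x τ) + b * (Y k τ - y τ)| :=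
                intervalIntegral.abs_integral_le_integral_abs ht.1
            _ ≤ ∫ τ in (0:ℝ)..t,
                (|a| * |X (k+1) τ - x τ| + (|b| * B * C ^ k) * τ ^ k / k.factorial) := by
                apply intervalIntegral.integral_mono_on ht.1 int1 int2
                intro τ hτ
                have hτT : τ ∈ Icc (0:ℝ) T := hsub t ht hτ
                have hyk := (ih τ hτT).2
                have h3 := mul_le_mul_of_nonneg_left hyk (abs_nonneg b)
                calc |a * (X (k+1) τ - x τ) + b * (Y k τ - y τ)|
                    ≤ |a * (X (k+1) τ - x τ)| + |b * (Y k τ - y τ)| := abs_add_le _ _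
                  _ = |a| * |X (k+1) τ - x τ| + |b| * |Y k τ - y τ| := by
                      rw [abs_mul, abs_mul]
                  _ ≤ |a| * |X (k+1) τ - x τ| + (|b| * B * C ^ k) * τ ^ k / k.factorial := by
                      have : |b| * (B * C ^ k * τ ^ k / k.factorial)
                          = (|b| * B * C ^ k) * τ ^ k / k.factorial := by ring
                      linarith [h3, this ▸ h3]
        exact gronwall_poly hT (abs_nonneg a) hlam0 k hu hint
      intro t ht
      have htpow : (0:ℝ) ≤ t ^ (k+1) := pow_nonneg ht.1 _
      have hQ0 : (0:ℝ) ≤ B * C ^ k * t ^ (k+1) / (k+1).factorial :=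
        div_nonneg (mul_nonneg (mul_nonneg hB0 (pow_nonneg hC0.le _)) htpow) (Nat.cast_nonneg _)
      have hC1 : E * |b| ≤ C := by
        rw [hCdef]
        nlinarith [mul_nonneg (mul_nonneg (mul_nonneg hE0.le (abs_nonneg b)) (abs_nonneg c))
          hT.le, abs_nonneg d]
      constructor
      · calc |X (k+1) t - x t|
            ≤ E * (|b| * B * C ^ k) * t ^ (k + 1) / (k + 1).factorial := hxb t ht
          _ = (E * |b|) * (B * C ^ k * t ^ (k+1) / (k+1).factorial) := by ring
          _ ≤ C * (B * C ^ k * t ^ (k+1) / (k+1).factorial) :=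
              mul_le_mul_of_nonneg_right hC1 hQ0
          _ = B * C ^ (k+1) * t ^ (k+1) / (k+1).factorial := by ring
      · -- y-error bound
        have int1 : IntervalIntegrable
            (fun τ => |c * (X (k+1) τ - x τ) + d * (Y k τ - y τ)|) volume 0 t :=
          hII _ (((continuousOn_const.mul ((hXc (k+1)).sub hxc)).add
            (continuousOn_const.mul ((hYc k).sub hyc))).abs) t ht
        have int2 : IntervalIntegrable (fun τ =>
            (|c| * (E * (|b| * B * C ^ k)) / (k+1).factorial) * τ ^ (k+1)
              + (|d| * (B * C ^ k) / k.factorial) * τ ^ k) volume 0 t :=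
          ((continuous_const.mul (continuous_pow (k+1))).add
            (continuous_const.mul (continuous_pow k))).intervalIntegrable 0 t
        have hfac : ((k+1).factorial : ℝ) = (k.factorial : ℝ) * ((k:ℝ) + 1) := by
          rw [Nat.factorial_succ]; push_cast; ring
        have hcoef0 : (0:ℝ) ≤ |c| * (E * (|b| * B * C ^ k)) / (k+1).factorial :=
          div_nonneg (mul_nonneg (abs_nonneg c) (mul_nonneg hE0.le hlam0)) (Nat.cast_nonneg _)
        calc |Y (k+1) t - y t|
            = |∫ τ in (0:ℝ)..t, (c * (X (k+1) τ - x τ) + d * (Y k τ - y τ))| := by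
              rw [hey k t ht]
          _ ≤ ∫ τ in (0:ℝ)..t, |c * (X (k+1) τ - x τ) + d * (Y k τ - y τ)| :=
              intervalIntegral.abs_integral_le_integral_abs ht.1
          _ ≤ ∫ τ in (0:ℝ)..t,
              ((|c| * (E * (|b| * B * C ^ k)) / (k+1).factorial) * τ ^ (k+1)
                + (|d| * (B * C ^ k) / k.factorial) * τ ^ k) := by
              apply intervalIntegral.integral_mono_on ht.1 int1 int2
              intro τ hτ
              have hτT : τ ∈ Icc (0:ℝ) T := hsub t ht hτ
              have hyk := (ih τ hτT).2
              have hxk := hxb τ hτT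
              have h3 := mul_le_mul_of_nonneg_left hyk (abs_nonneg d)
              have h4 := mul_le_mul_of_nonneg_left hxk (abs_nonneg c)
              calc |c * (X (k+1) τ - x τ) + d * (Y k τ - y τ)|
                  ≤ |c * (X (k+1) τ - x τ)| + |d * (Y k τ - y τ)| := abs_add_le _ _
                _ = |c| * |X (k+1) τ - x τ| + |d| * |Y k τ - y τ| := by rw [abs_mul, abs_mul]
                _ ≤ (|c| * (E * (|b| * B * C ^ k)) / (k+1).factorial) * τ ^ (k+1)
                    + (|d| * (B * C ^ k) / k.factorial) * τ ^ k := by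
                    have e1 : |c| * (E * (|b| * B * C ^ k) * τ ^ (k + 1) / (k + 1).factorial)
                        = (|c| * (E * (|b| * B * C ^ k)) / (k+1).factorial) * τ ^ (k+1) := by
                      ring
                    have e2 : |d| * (B * C ^ k * τ ^ k / k.factorial)
                        = (|d| * (B * C ^ k) / k.factorial) * τ ^ k := by ring
                    linarith [e1 ▸ h4, e2 ▸ h3]
          _ = (|c| * (E * (|b| * B * C ^ k)) / (k+1).factorial) * (t ^ (k+2) / ((k:ℝ)+2))
              + (|d| * (B * C ^ k) / k.factorial) * (t ^ (k+1) / ((k:ℝ)+1)) := by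
              rw [intervalIntegral.integral_add
                  ((by fun_prop : Continuous (fun τ : ℝ => (|c| * (E * (|b| * B * C ^ k)) / (k+1).factorial) * τ ^ (k+1))).intervalIntegrable 0 t)
                  ((by fun_prop : Continuous (fun τ : ℝ => (|d| * (B * C ^ k) / k.factorial) * τ ^ k)).intervalIntegrable 0 t),
                intervalIntegral.integral_const_mul, intervalIntegral.integral_const_mul,
                integral_pow, integral_pow,
                zero_pow (Nat.succ_ne_zero _), zero_pow (Nat.succ_ne_zero _)]
              push_cast
              ring
          _ ≤ B * C ^ (k+1) * t ^ (k+1) / (k+1).factorial := by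
              have ht2 : t ^ (k+2) / ((k:ℝ)+2) ≤ T * t ^ (k+1) := by
                have h1 : t ^ (k+2) ≤ T * t ^ (k+1) := by
                  calc t ^ (k+2) = t * t ^ (k+1) := by ring
                    _ ≤ T * t ^ (k+1) := mul_le_mul_of_nonneg_right ht.2 htpow
                have h2 : t ^ (k+2) / ((k:ℝ)+2) ≤ t ^ (k+2) / 1 := by
                  apply div_le_div_of_nonneg_left (pow_nonneg ht.1 _) one_pos
                  · push_cast; linarith [Nat.cast_nonneg (α := ℝ) k]
                simpa using h2.trans (by simpa using h1)
              have step1 : (|c| * (E * (|b| * B * C ^ k)) / (k+1).factorial) * (t ^ (k+2) / ((k:ℝ)+2))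
                  ≤ (|c| * E * |b| * T) * (B * C ^ k * t ^ (k+1) / (k+1).factorial) := by
                have := mul_le_mul_of_nonneg_left ht2 hcoef0
                calc (|c| * (E * (|b| * B * C ^ k)) / (k+1).factorial) * (t ^ (k+2) / ((k:ℝ)+2))
                    ≤ (|c| * (E * (|b| * B * C ^ k)) / (k+1).factorial) * (T * t ^ (k+1)) := this
                  _ = (|c| * E * |b| * T) * (B * C ^ k * t ^ (k+1) / (k+1).factorial) := by ring
              have step2 : (|d| * (B * C ^ k) / k.factorial) * (t ^ (k+1) / ((k:ℝ)+1))
                  = |d| * (B * C ^ k * t ^ (k+1) / (k+1).factorial) := by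
                rw [hfac]
                have h1 : (k.factorial : ℝ) ≠ 0 := ne_of_gt hfacpos
                have h2 : ((k:ℝ) + 1) ≠ 0 := by positivity
                field_simp
              have hC2 : |c| * E * |b| * T + |d| ≤ C := by
                rw [hCdef]
                nlinarith [mul_nonneg hE0.le (abs_nonneg b)]
              have hsum := mul_le_mul_of_nonneg_right hC2 hQ0
              calc (|c| * (E * (|b| * B * C ^ k)) / (k+1).factorial) * (t ^ (k+2) / ((k:ℝ)+2))
                  + (|d| * (B * C ^ k) / k.factorial) * (t ^ (k+1) / ((k:ℝ)+1))
                  ≤ (|c| * E * |b| * T + |d|) * (B * C ^ k * t ^ (k+1) / (k+1).factorial) := by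
                    rw [step2] at *
                    linarith [step1]
                _ ≤ C * (B * C ^ k * t ^ (k+1) / (k+1).factorial) := hsum
                _ = B * C ^ (k+1) * t ^ (k+1) / (k+1).factorial := by ring
  -- conclude
  intro k t ht
  obtain ⟨h1, h2⟩ := key k t ht
  have hbound : B * C ^ k * t ^ k / k.factorial ≤ (C * T) ^ k / k.factorial * B := by
    calc B * C ^ k * t ^ k / k.factorial ≤ B * C ^ k * T ^ k / k.factorial := by
          gcongr
          · exact ht.1
          · exact ht.2
      _ = (C * T) ^ k / k.factorial * B := by rw [mul_pow]; ring
  exact max_le (h1.trans hbound) (h2.trans hbound)
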